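/- Let x_1,…,x_N be independent real random variables with E[x_i] = 0, E[x_i²] = 1, and E[x_i⁴] = k for all i (with k finite). Let v_1,…,v_N ∈ ℝ, let W be a real D×N matrix with nonzero columns w_1,…,w_N, set n_i = ‖w_i‖², and set y = Σ_i v_i x_i², ỹ = Σ_{a=1}^D ((W x)_a)² + b with b = −Σ_i (n_i − v_i). Then E[(ỹ − y)²] = (k−1)·Σ_i (n_i − v_i)² − 2·Σ_i n_i² + 2·Σ_i n_i²/C_i(W). -/

import Mathlib

open scoped BigOperators
open MeasureTheory ProbabilityTheory Matrix

/-- The capacity of feature `i` for an embedding matrix `W`: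
`C_i = (w_i·w_i)² / (∑_j (w_i·w_j)²)`, with `C_i = 0` when `w_i = 0`
(automatic from `0 / 0 = 0`). -/
noncomputable def capacity {D N : ℕ} (W : Matrix (Fin D) (Fin N) ℝ) (i : Fin N) : ℝ :=
  (∑ a, W a i * W a i) ^ 2 / ∑ j, (∑ a, W a i * W a j) ^ 2

lemma aux_integral_prod_pow {Ω : Type*} [MeasurableSpace Ω] (μ : Measure Ω)
    [IsProbabilityMeasure μ] {N : ℕ} (X : Fin N → Ω → ℝ) (hmeas : ∀ i, Measurable (X i))
    (hindep : iIndepFun X μ) (c : Fin N → ℕ) (s : Finset (Fin N)) :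
    ∫ ω, ∏ t ∈ s, (X t ω) ^ (c t) ∂μ = ∏ t ∈ s, ∫ ω, (X t ω) ^ (c t) ∂μ := by
  classical
  set Y : Fin N → Ω → ℝ := fun t ω => (X t ω) ^ (c t) with hY
  have hYindep : iIndepFun Y μ := by
    have := hindep.comp (fun t (x : ℝ) => x ^ (c t)) (fun t => measurable_id.pow_const (c t))
    exact this
  have hYmeas : ∀ t, Measurable (Y t) := fun t => (hmeas t).pow_const (c t)
  induction s using Finset.induction_on with
  | empty => simp
  | @insert a t ha ih =>
      have hprod : (fun ω => ∏ i ∈ t, Y i ω) = (∏ i ∈ t, Y i) := by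
        ext ω; simp [Finset.prod_apply]
      have hindepa : IndepFun (Y a) (∏ i ∈ t, Y i) μ :=
        ((hYindep.indepFun_finsetProd_of_notMem hYmeas ha)).symm
      calc ∫ ω, ∏ i ∈ insert a t, Y i ω ∂μ
          = ∫ ω, Y a ω * ∏ i ∈ t, Y i ω ∂μ := by
            congr 1; ext ω; rw [Finset.prod_insert ha]
        _ = (∫ ω, Y a ω ∂μ) * ∫ ω, ∏ i ∈ t, Y i ω ∂μ := by
            have hm2 : AEStronglyMeasurable (∏ i ∈ t, Y i) μ := by
              rw [← hprod]
              exact (Finset.measurable_prod t (fun i _ => hYmeas i)).aestronglyMeasurable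
            have := hindepa.integral_mul_eq_mul_integral (hYmeas a).aestronglyMeasurable hm2
            have h2 : (Y a * ∏ i ∈ t, Y i) = fun ω => Y a ω * ∏ i ∈ t, Y i ω := by
              ext ω; simp [← hprod]
            rw [h2] at this
            rw [this, ← hprod]
        _ = ∏ i ∈ insert a t, ∫ ω, Y i ω ∂μ := by rw [Finset.prod_insert ha, ih]

lemma aux_moment2 {Ω : Type*} [MeasurableSpace Ω] (μ : Measure Ω)
    [IsProbabilityMeasure μ] {N : ℕ} (X : Fin N → Ω → ℝ) (hmeas : ∀ i, Measurable (X i))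
    (hindep : iIndepFun X μ)
    (h1 : ∀ i, ∫ ω, X i ω ∂μ = 0) (h2 : ∀ i, ∫ ω, (X i ω) ^ 2 ∂μ = 1)
    (i j : Fin N) :
    ∫ ω, X i ω * X j ω ∂μ = if i = j then 1 else 0 := by
  by_cases hij : i = j
  · subst hij
    simp only [if_pos rfl]
    rw [show (fun ω => X i ω * X i ω) = fun ω => X i ω ^ 2 by ext ω; ring]
    exact h2 i
  · rw [if_neg hij]
    have := (hindep.indepFun hij).integral_mul_eq_mul_integral (hmeas i).aestronglyMeasurable
      (hmeas j).aestronglyMeasurable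
    have h2' : (X i * X j) = fun ω => X i ω * X j ω := rfl
    rw [h2'] at this
    rw [this, h1 i, h1 j, mul_zero]

lemma aux_moment4 {Ω : Type*} [MeasurableSpace Ω] (μ : Measure Ω)
    [IsProbabilityMeasure μ] {N : ℕ} (X : Fin N → Ω → ℝ) (hmeas : ∀ i, Measurable (X i))
    (hindep : iIndepFun X μ)
    (h1 : ∀ i, ∫ ω, X i ω ∂μ = 0) (h2 : ∀ i, ∫ ω, (X i ω) ^ 2 ∂μ = 1)
    (k : ℝ) (h4 : ∀ i, ∫ ω, (X i ω) ^ 4 ∂μ = k)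
    (i j l m : Fin N) :
    ∫ ω, X i ω * X j ω * X l ω * X m ω ∂μ =
      (if i = j then (1:ℝ) else 0) * (if l = m then 1 else 0)
      + (if i = l then 1 else 0) * (if j = m then 1 else 0)
      + (if i = m then 1 else 0) * (if j = l then 1 else 0)
      + (k - 3) * (if i = j ∧ j = l ∧ l = m then 1 else 0) := by
  classical
  set e : Fin N → Fin N → ℕ := fun a t => if t = a then 1 else 0 with he
  set d : Fin N → ℕ := fun t => e i t + e j t + e l t + e m t with hd
  have key : ∀ (a : Fin N) (ω : Ω), ∏ t, X t ω ^ (e a t) = X a ω := by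
    intro a ω
    rw [Finset.prod_eq_single a]
    · simp [e]
    · intro b _ hb; simp [e, hb]
    · intro h; exact absurd (Finset.mem_univ a) h
  have step1 : (fun ω => X i ω * X j ω * X l ω * X m ω)
      = fun ω => ∏ t, X t ω ^ d t := by
    ext ω
    simp only [d, pow_add, Finset.prod_mul_distrib, key]
  rw [step1, aux_integral_prod_pow μ X hmeas hindep d Finset.univ]
  set F : Fin N → ℝ := fun t => ∫ ω, X t ω ^ d t ∂μ with hF
  have hd0 : ∀ t, d t = 0 → F t = 1 := by intro t h; simp [F, h]
  have hd1 : ∀ t, d t = 1 → F t = 0 := by intro t h; simp only [F, h, pow_one]; exact h1 t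
  have hd2 : ∀ t, d t = 2 → F t = 1 := by intro t h; simp only [F, h]; exact h2 t
  have hd4 : ∀ t, d t = 4 → F t = k := by intro t h; simp only [F, h]; exact h4 t
  have hzero : ∀ t, d t = 1 → ∏ t', F t' = 0 :=
    fun t h => Finset.prod_eq_zero (Finset.mem_univ t) (hd1 t h)
  have hpair : ∀ (a b : Fin N), a ≠ b → (∀ t, t = a ∨ t = b → d t = 2) →
      (∀ t, t ≠ a → t ≠ b → d t = 0) → ∏ t', F t' = 1 := by
    intro a b hab hin hout
    apply Finset.prod_eq_one
    intro t _
    by_cases hta : t = a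
    · exact hd2 t (hin t (Or.inl hta))
    · by_cases htb : t = b
      · exact hd2 t (hin t (Or.inr htb))
      · exact hd0 t (hout t hta htb)
  by_cases hij : i = j
  · subst hij
    by_cases hlm : l = m
    · subst hlm
      by_cases hil : i = l
      · subst hil
        have : ∏ t', F t' = k := by
          rw [Finset.prod_eq_single i]
          · exact hd4 i (by simp [d, e])
          · intro b _ hb; exact hd0 b (by simp [d, e, hb])
          · intro h; exact absurd (Finset.mem_univ i) h
        rw [this]; simp; ring
      · rw [hpair i l hil
            (by rintro t (rfl | rfl) <;> simp [d, e, hil, Ne.symm hil])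
            (by intro t hta htb; simp [d, e, hta, htb])]
        simp [hil]
    · -- i = j, l ≠ m
      by_cases hli : l = i
      · rw [hzero m (by subst hli; simp [d, e, Ne.symm hlm])]
        subst hli
        simp [hlm, Ne.symm hlm]
      · rw [hzero l (by simp [d, e, hli, hlm])]
        have h1' : i ≠ l := fun h => hli h.symm
        simp [hlm, hli, h1']
  · by_cases hlm : l = m
    · subst hlm
      by_cases hli : l = i
      · rw [hzero j (by subst hli; simp [d, e, Ne.symm hij])]
        subst hli
        simp [hij, Ne.symm hij]
      · rw [hzero i (by simp [d, e, hij, Ne.symm hli])]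
        have h1' : i ≠ l := fun h => hli h.symm
        simp [hij, h1']
    · -- i ≠ j, l ≠ m
      by_cases hil : i = l
      · by_cases him : i = m
        · exact absurd (hil.symm.trans him) hlm
        · by_cases hjm : j = m
          · rw [hpair i j hij
              (by rintro t (rfl | rfl) <;>
                simp [d, e, hij, Ne.symm hij, ← hil, ← hjm] <;> omega)
              (by intro t hta htb; simp [d, e, hta, htb, ← hil, ← hjm])]
            simp [hij, hil, hjm, him, hlm, Ne.symm hlm]
          · have hjl : j ≠ l := fun h => hij ((h.trans hil.symm).symm)
            rw [hzero j (by simp [d, e, Ne.symm hij, hjm, hjl])]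
            simp [hij, him, hjm, hjl]
      · by_cases him : i = m
        · by_cases hjl : j = l
          · rw [hpair i j hij
              (by rintro t (rfl | rfl) <;>
                simp [d, e, hij, Ne.symm hij, ← him, ← hjl] <;> omega)
              (by intro t hta htb; simp [d, e, hta, htb, ← him, ← hjl])]
            simp [hij, hil, him, hjl, hlm, Ne.symm hlm]
          · have hjm : j ≠ m := fun h => hij ((h.trans him.symm).symm)
            rw [hzero j (by simp [d, e, Ne.symm hij, hjl, hjm])]
            simp [hij, hil, hjl, hjm]
        · rw [hzero i (by simp [d, e, hij, hil, him])]
          simp [hij, hil, him]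

lemma aux_mul_L4 {Ω : Type*} [MeasurableSpace Ω] {μ : Measure Ω} {f g : Ω → ℝ}
    (hf : MemLp f 4 μ) (hg : MemLp g 4 μ) : MemLp (fun ω => f ω * g ω) 2 μ :=
  haveI : ENNReal.HolderTriple 4 4 2 := ⟨by
      have : (4:ENNReal) = 2 * 2 := by norm_num
      rw [this, ENNReal.mul_inv (by norm_num) (by norm_num), ← two_mul,
        ← mul_assoc, ENNReal.mul_inv_cancel (by norm_num) (by norm_num), one_mul]⟩
  hg.smul (φ := f) hf (p := 4) (q := 4) (r := 2)

lemma aux_mul_L2 {Ω : Type*} [MeasurableSpace Ω] {μ : Measure Ω} {f g : Ω → ℝ}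
    (hf : MemLp f 2 μ) (hg : MemLp g 2 μ) : Integrable (fun ω => f ω * g ω) μ := by
  haveI : ENNReal.HolderTriple 2 2 1 := ⟨by
        rw [inv_one, ← two_mul, ENNReal.mul_inv_cancel (by norm_num) (by norm_num)]⟩
  have := hg.smul (φ := f) hf (p := 2) (q := 2) (r := 1)
  exact memLp_one_iff_integrable.mp this

/-- For the quadratic toy model with nonzero embedding columns and
`n_i = ‖w_i‖²`, the expected loss can be written in terms of the capacities:
`E[(ỹ - y)²] = (k-1) ∑ᵢ (nᵢ - vᵢ)² - 2 ∑ᵢ nᵢ² + 2 ∑ᵢ nᵢ²/Cᵢ(W)`. -/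
theorem quadratic_model_expected_loss_capacity
    {Ω : Type*} [MeasurableSpace Ω] (μ : Measure Ω) [IsProbabilityMeasure μ]
    {N D : ℕ} (X : Fin N → Ω → ℝ) (hmeas : ∀ i, Measurable (X i))
    (hindep : iIndepFun X μ)
    (hL4 : ∀ i, MemLp (X i) 4 μ)
    (h1 : ∀ i, ∫ ω, X i ω ∂μ = 0)
    (h2 : ∀ i, ∫ ω, (X i ω) ^ 2 ∂μ = 1)
    (k : ℝ) (h4 : ∀ i, ∫ ω, (X i ω) ^ 4 ∂μ = k)
    (v : Fin N → ℝ) (W : Matrix (Fin D) (Fin N) ℝ)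
    (hnz : ∀ i, Wᵀ i ≠ 0)
    (n : Fin N → ℝ) (hn : ∀ i, n i = ∑ a, W a i * W a i)
    (b : ℝ) (hb : b = -∑ i, (n i - v i)) :
    ∫ ω, ((∑ a, (∑ i, W a i * X i ω) ^ 2 + b) - ∑ i, v i * (X i ω) ^ 2) ^ 2 ∂μ =
      (k - 1) * ∑ i, (n i - v i) ^ 2 - 2 * ∑ i, (n i) ^ 2 +
        2 * ∑ i, (n i) ^ 2 / capacity W i := by
  classical
  set G : Fin N → Fin N → ℝ := fun i j => ∑ a, W a i * W a j with hG
  set A : Fin N → Fin N → ℝ := fun i j => G i j - if i = j then v i else 0 with hA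
  set g : Fin N × Fin N → Ω → ℝ :=
    fun p ω => A p.1 p.2 * (X p.1 ω * X p.2 ω - if p.1 = p.2 then 1 else 0) with hg
  -- Step 1: pointwise rewriting
  have step1 : ∀ ω, (∑ a, (∑ i, W a i * X i ω) ^ 2 + b) - ∑ i, v i * (X i ω) ^ 2
      = ∑ p : Fin N × Fin N, g p ω := by
    intro ω
    have expand : ∑ a, (∑ i, W a i * X i ω) ^ 2
        = ∑ i, ∑ j, G i j * (X i ω * X j ω) := by
      calc ∑ a, (∑ i, W a i * X i ω) ^ 2
          = ∑ a, ∑ i, ∑ j, (W a i * W a j) * (X i ω * X j ω) := by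
            refine Finset.sum_congr rfl fun a _ => ?_
            rw [sq, Finset.sum_mul_sum]
            exact Finset.sum_congr rfl fun i _ =>
              Finset.sum_congr rfl fun j _ => by ring
        _ = ∑ i, ∑ j, ∑ a, (W a i * W a j) * (X i ω * X j ω) := by
            rw [Finset.sum_comm]
            exact Finset.sum_congr rfl fun i _ => Finset.sum_comm
        _ = ∑ i, ∑ j, G i j * (X i ω * X j ω) := by
            refine Finset.sum_congr rfl fun i _ =>
              Finset.sum_congr rfl fun j _ => ?_
            rw [hG, ← Finset.sum_mul]
    have gsplit : ∀ i j : Fin N, g (i, j) ω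
        = G i j * (X i ω * X j ω)
          - (if i = j then v i * (X i ω * X j ω) + (G i i - v i) else 0) := by
      intro i j
      by_cases h : i = j
      · subst h; simp [hg, hA]; ring
      · simp only [hg, hA, if_neg h]; ring
    calc (∑ a, (∑ i, W a i * X i ω) ^ 2 + b) - ∑ i, v i * (X i ω) ^ 2
        = ∑ i, ∑ j, G i j * (X i ω * X j ω)
            - ∑ i, (v i * (X i ω * X i ω) + (G i i - v i)) := by
          rw [expand, hb]
          have : ∀ i, n i = G i i := fun i => hn i
          rw [Finset.sum_add_distrib]
          simp only [this]
          have hsq : ∀ i : Fin N, v i * (X i ω * X i ω) = v i * (X i ω) ^ 2 := by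
            intro i; ring
          rw [Finset.sum_congr rfl fun i _ => hsq i]
          ring
      _ = ∑ i, (∑ j, G i j * (X i ω * X j ω)
            - (v i * (X i ω * X i ω) + (G i i - v i))) := (Finset.sum_sub_distrib _ _).symm
      _ = ∑ i, ∑ j, (G i j * (X i ω * X j ω)
            - (if i = j then v i * (X i ω * X j ω) + (G i i - v i) else 0)) := by
          refine Finset.sum_congr rfl fun i _ => ?_
          rw [Finset.sum_sub_distrib, Finset.sum_ite_eq (Finset.univ : Finset (Fin N)) i
            (fun j => v i * (X i ω * X j ω) + (G i i - v i))]
          simp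
      _ = ∑ p : Fin N × Fin N, g p ω := by
          rw [Fintype.sum_prod_type]
          exact Finset.sum_congr rfl fun i _ =>
            Finset.sum_congr rfl fun j _ => (gsplit i j).symm
  -- Step 2: integrability
  have hX2 : ∀ i j : Fin N, MemLp (fun ω => X i ω * X j ω) 2 μ :=
    fun i j => aux_mul_L4 (hL4 i) (hL4 j)
  have hgL2 : ∀ p : Fin N × Fin N, MemLp (g p) 2 μ := by
    intro p
    have h1' : MemLp (fun ω => X p.1 ω * X p.2 ω - if p.1 = p.2 then (1:ℝ) else 0) 2 μ :=
      (hX2 p.1 p.2).sub (memLp_const _)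
    exact h1'.const_mul _
  have hgint : ∀ p q : Fin N × Fin N, Integrable (fun ω => g p ω * g q ω) μ :=
    fun p q => aux_mul_L2 (hgL2 p) (hgL2 q)
  have hpair_int : ∀ i j : Fin N, Integrable (fun ω => X i ω * X j ω) μ :=
    fun i j => (hX2 i j).integrable one_le_two
  have hquad_int : ∀ i j l m : Fin N,
      Integrable (fun ω => (X i ω * X j ω) * (X l ω * X m ω)) μ :=
    fun i j l m => aux_mul_L2 (hX2 i j) (hX2 l m)
  -- Step 3
  have step3 : ∫ ω, ((∑ a, (∑ i, W a i * X i ω) ^ 2 + b) - ∑ i, v i * (X i ω) ^ 2) ^ 2 ∂μ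
      = ∑ p : Fin N × Fin N, ∑ q : Fin N × Fin N, ∫ ω, g p ω * g q ω ∂μ := by
    have hpt : ∀ ω, ((∑ a, (∑ i, W a i * X i ω) ^ 2 + b) - ∑ i, v i * (X i ω) ^ 2) ^ 2
        = ∑ p : Fin N × Fin N, ∑ q : Fin N × Fin N, g p ω * g q ω := by
      intro ω; rw [step1 ω, sq, Finset.sum_mul_sum]
    rw [integral_congr_ae (Filter.Eventually.of_forall hpt)]
    rw [integral_finset_sum _ (fun p _ => integrable_finset_sum _ (fun q _ => hgint p q))]
    exact Finset.sum_congr rfl fun p _ => integral_finset_sum _ (fun q _ => hgint p q)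
  -- Step 4
  have step4 : ∀ p q : Fin N × Fin N, ∫ ω, g p ω * g q ω ∂μ
      = A p.1 p.2 * A q.1 q.2 *
        ((if p.1 = q.1 then (1:ℝ) else 0) * (if p.2 = q.2 then 1 else 0)
         + (if p.1 = q.2 then 1 else 0) * (if p.2 = q.1 then 1 else 0)
         + (k - 3) * (if p.1 = p.2 ∧ p.2 = q.1 ∧ q.1 = q.2 then 1 else 0)) := by
    rintro ⟨i, j⟩ ⟨l, m⟩
    have hrw : (fun ω => g (i, j) ω * g (l, m) ω)
        = fun ω => (A i j * A l m) *
          ((X i ω * X j ω) * (X l ω * X m ω)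
            - (if l = m then (1:ℝ) else 0) * (X i ω * X j ω)
            - (if i = j then (1:ℝ) else 0) * (X l ω * X m ω)
            + (if i = j then (1:ℝ) else 0) * (if l = m then 1 else 0)) := by
      ext ω; simp only [hg]; ring
    rw [hrw, integral_const_mul]
    have i1 := hquad_int i j l m
    have i2 : Integrable (fun ω => (if l = m then (1:ℝ) else 0) * (X i ω * X j ω)) μ :=
      (hpair_int i j).const_mul _
    have i3 : Integrable (fun ω => (if i = j then (1:ℝ) else 0) * (X l ω * X m ω)) μ :=
      (hpair_int l m).const_mul _
    have i12 : Integrable (fun ω => X i ω * X j ω * (X l ω * X m ω)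
        - (if l = m then (1:ℝ) else 0) * (X i ω * X j ω)) μ := i1.sub i2
    have i123 : Integrable (fun ω => X i ω * X j ω * (X l ω * X m ω)
        - (if l = m then (1:ℝ) else 0) * (X i ω * X j ω)
        - (if i = j then (1:ℝ) else 0) * (X l ω * X m ω)) μ := i12.sub i3
    rw [integral_add i123 (integrable_const _),
      integral_sub i12 i3, integral_sub i1 i2,
      integral_const_mul, integral_const_mul, integral_const]
    rw [show (fun ω => (X i ω * X j ω) * (X l ω * X m ω))
        = fun ω => X i ω * X j ω * X l ω * X m ω from by ext ω; ring]
    rw [aux_moment4 μ X hmeas hindep h1 h2 k h4 i j l m,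
      aux_moment2 μ X hmeas hindep h1 h2 i j,
      aux_moment2 μ X hmeas hindep h1 h2 l m]
    simp only [measure_univ, probReal_univ, ENNReal.toReal_one, one_smul, smul_eq_mul]
    ring
  -- Step 5
  have key1 : ∀ (a c : Fin N), ∑ q : Fin N × Fin N, A q.1 q.2 *
      ((if a = q.1 then (1:ℝ) else 0) * (if c = q.2 then 1 else 0)) = A a c := by
    intro a c
    rw [Fintype.sum_prod_type]
    simp [mul_ite, ite_mul, Finset.sum_ite_eq]
  have step5 : ∀ i j : Fin N, ∑ q : Fin N × Fin N, A q.1 q.2 *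
      ((if i = q.1 then (1:ℝ) else 0) * (if j = q.2 then 1 else 0)
       + (if i = q.2 then 1 else 0) * (if j = q.1 then 1 else 0)
       + (k - 3) * (if i = j ∧ j = q.1 ∧ q.1 = q.2 then 1 else 0))
      = A i j + A j i + (k - 3) * (if i = j then A i i else 0) := by
    intro i j
    simp only [mul_add, Finset.sum_add_distrib]
    congr 1
    · congr 1
      · exact key1 i j
      · rw [← key1 j i]
        exact Finset.sum_congr rfl fun q _ => by ring
    · by_cases hij : i = j
      · subst hij
        simp only [true_and, if_pos rfl]
        rw [Fintype.sum_prod_type]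
        have : ∀ l : Fin N, ∑ m : Fin N, A l m * ((k - 3) *
            (if i = l ∧ l = m then (1:ℝ) else 0))
            = if i = l then (k - 3) * A l l else 0 := by
          intro l
          by_cases hil : i = l
          · subst hil
            simp only [true_and, if_pos rfl]
            rw [Finset.sum_congr rfl (fun m _ => show A i m * ((k-3) *
                (if i = m then (1:ℝ) else 0)) = if i = m then (k-3) * A i m else 0 from by
              by_cases h : i = m <;> simp [h] <;> ring)]
            rw [Finset.sum_ite_eq]
            simp
          · simp [hil]
        rw [Finset.sum_congr rfl (fun l _ => this l), Finset.sum_ite_eq]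
        simp
      · simp [hij]
  -- Combine
  rw [step3]
  have step6 : ∑ p : Fin N × Fin N, ∑ q : Fin N × Fin N, ∫ ω, g p ω * g q ω ∂μ
      = ∑ p : Fin N × Fin N, A p.1 p.2 *
          (A p.1 p.2 + A p.2 p.1 + (k - 3) * (if p.1 = p.2 then A p.1 p.1 else 0)) := by
    refine Finset.sum_congr rfl fun p _ => ?_
    rw [← step5 p.1 p.2, Finset.mul_sum]
    refine Finset.sum_congr rfl fun q _ => ?_
    rw [step4 p q]; ring
  rw [step6]
  have hAsym : ∀ i j : Fin N, A j i = A i j := by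
    intro i j
    simp only [hA]
    congr 1
    · exact Finset.sum_congr rfl fun a _ => mul_comm _ _
    · by_cases h : i = j
      · subst h; rfl
      · rw [if_neg h, if_neg (fun hh => h hh.symm)]
  have hdiag : ∀ i : Fin N, A i i = n i - v i := by
    intro i; simp only [hA, if_pos rfl, hG, hn i]
    simp
  -- capacity
  have hcap : ∀ i : Fin N, n i ^ 2 / capacity W i = ∑ j, (G i j) ^ 2 := by
    intro i
    have hni : 0 < n i := by
      rw [hn i]
      have hex : ∃ a, W a i ≠ 0 := by
        have := hnz i
        rw [Function.ne_iff] at this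
        obtain ⟨a, ha⟩ := this
        exact ⟨a, by simpa [Matrix.transpose_apply] using ha⟩
      obtain ⟨a, ha⟩ := hex
      exact Finset.sum_pos' (fun c _ => mul_self_nonneg _)
        ⟨a, Finset.mem_univ a, mul_self_pos.mpr ha⟩
    have hS : 0 < ∑ j, (G i j) ^ 2 := by
      refine Finset.sum_pos' (fun j _ => sq_nonneg _) ⟨i, Finset.mem_univ i, ?_⟩
      have : G i i = n i := (hn i).symm
      rw [this]; exact pow_pos hni 2
    have hcapdef : capacity W i = n i ^ 2 / ∑ j, (G i j) ^ 2 := by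
      unfold capacity
      rw [hn i]
    rw [hcapdef, div_div_eq_mul_div, mul_comm, mul_div_assoc,
      div_self (ne_of_gt (pow_pos hni 2)), mul_one]
  -- final algebra
  have hsq : ∀ i j : Fin N, A i j * (A i j + A i j + (k - 3) * (if i = j then A i i else 0))
      = 2 * (G i j) ^ 2 + (if j = i then
          (2 + (k - 3)) * (n i - v i) ^ 2 - 2 * (n i) ^ 2 else 0) := by
    intro i j
    by_cases h : i = j
    · subst h
      rw [if_pos rfl, if_pos rfl, hdiag i]
      have : G i i = n i := (hn i).symm
      rw [this]; ring
    · rw [if_neg h, if_neg (fun hh => h hh.symm)]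
      have : A i j = G i j := by simp only [hA, if_neg h, sub_zero]
      rw [this]; ring
  calc ∑ p : Fin N × Fin N, A p.1 p.2 *
          (A p.1 p.2 + A p.2 p.1 + (k - 3) * (if p.1 = p.2 then A p.1 p.1 else 0))
      = ∑ i, ∑ j, (2 * (G i j) ^ 2 + (if j = i then
          (2 + (k - 3)) * (n i - v i) ^ 2 - 2 * (n i) ^ 2 else 0)) := by
        rw [Fintype.sum_prod_type]
        refine Finset.sum_congr rfl fun i _ => Finset.sum_congr rfl fun j _ => ?_
        rw [hAsym i j, hsq i j]
    _ = ∑ i, (2 * ∑ j, (G i j) ^ 2 + ((2 + (k - 3)) * (n i - v i) ^ 2 - 2 * (n i) ^ 2)) := by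
        refine Finset.sum_congr rfl fun i _ => ?_
        rw [Finset.sum_add_distrib, ← Finset.mul_sum, Finset.sum_ite_eq']
        simp
    _ = (k - 1) * ∑ i, (n i - v i) ^ 2 - 2 * ∑ i, (n i) ^ 2 +
        2 * ∑ i, (n i) ^ 2 / capacity W i := by
        rw [Finset.sum_congr rfl (fun i _ => by rw [← hcap i])]
        rw [Finset.sum_add_distrib, Finset.sum_sub_distrib,
          ← Finset.mul_sum, ← Finset.mul_sum, ← Finset.mul_sum]
        ring
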